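/- For every natural number N, the derivation e_N annihilates the element z + z⁻¹ + xy of A, i.e. e_N(z + z⁻¹ + xy) = 0. -/
import Mathlib


open LaurentPolynomial

noncomputable section

/-- The ring `A = ℂ[x, y, z, z⁻¹]`: Laurent polynomials in `z` over `ℂ[x, y]`. -/
abbrev A : Type := LaurentPolynomial (MvPolynomial (Fin 2) ℂ)

/-- The variable `x`. -/
def Xv : A := C (MvPolynomial.X 0)

/-- The variable `y`. -/
def Yv : A := C (MvPolynomial.X 1)

/-- The variable `z`. -/
def Zv : A := T 1

/-- The variable `z⁻¹`. -/
def Zi : A := T (-1)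

lemma ZvZi : Zv * Zi = 1 := by
  rw [Zv, Zi, ← T_add]; norm_num

lemma der_Zi (d : Derivation ℂ A A) : d Zi = -(Zi * Zi * d Zv) := by
  have h0 : d (Zv * Zi) = 0 := by rw [ZvZi]; exact d.map_one_eq_zero
  rw [d.leibniz, smul_eq_mul, smul_eq_mul] at h0
  have h1 : Zi * (Zv * d Zi + Zi * d Zv) = Zi * 0 := by rw [h0]
  have h2 : Zi * Zv = 1 := by rw [mul_comm]; exact ZvZi
  calc d Zi = Zi * Zv * d Zi := by rw [h2, one_mul]
    _ = -(Zi * Zi * d Zv) := by linear_combination h1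

/-- Every derivation `e_N` annihilates `z + z⁻¹ + xy`. -/
theorem stmt4
    (e f kk kk' : Derivation ℂ A A)
    (hex : e Xv = 0) (hey : e Yv = Zv - Zi) (hez : e Zv = -(Xv * Zv))
    (hfx : f Xv = -(Zv - Zi)) (hfy : f Yv = 0) (hfz : f Zv = Yv * Zv)
    (hkx : kk Xv = Xv * Zv) (hky : kk Yv = -(Yv * Zv)) (hkz : kk Zv = 0)
    (hk'x : kk' Xv = Xv * Zi) (hk'y : kk' Yv = -(Yv * Zi)) (hk'z : kk' Zv = 0)
    (E F : ℕ → Derivation ℂ A A) (hE0 : E 0 = e) (hF0 : F 0 = f)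
    (hEs : ∀ (n : ℕ) (a : A), E (n + 1) a = (kk + kk') (E n a) - E n ((kk + kk') a))
    (hFs : ∀ (n : ℕ) (a : A), F (n + 1) a = (kk + kk') (F n a) - F n ((kk + kk') a))
    (N : ℕ) :
    E N (Zv + Zi + Xv * Yv) = 0 := by
  have hzz : Zv * Zi = 1 := ZvZi
  induction N with
  | zero =>
    rw [hE0]
    have hzi : e Zi = -(Zi * Zi * e Zv) := der_Zi e
    rw [map_add, map_add, e.leibniz, hzi, hex, hey, hez, smul_eq_mul, smul_eq_mul]
    linear_combination (Xv * Zi) * hzz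
  | succ n ih =>
    rw [hEs]
    have hL : (kk + kk') (Zv + Zi + Xv * Yv) = 0 := by
      have h1 : kk Zi = -(Zi * Zi * kk Zv) := der_Zi kk
      have h2 : kk' Zi = -(Zi * Zi * kk' Zv) := der_Zi kk'
      have h3 : kk' Zv = 0 := hk'z
      simp only [Derivation.add_apply, map_add, Derivation.leibniz, h1, h2, hkz, h3,
        hkx, hky, hk'x, hk'y, smul_eq_mul]
      ring
    rw [hL, ih, map_zero, map_zero, sub_zero]
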